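/- Let n₁ ≥ n₂ ≥ … ≥ n_r be a partition of n with conjugate m_k = #{i : n_i ≥ k} and partial sums s_t = m₁ + … + m_t (s₀ = 0). Define the diagonal n×n matrix δ = Σ_{k≥1} Σ_{j=1}^{m_k} ((Σ_l l·m_l)/(Σ_l m_l) − k) E_{s_{k−1}+j, s_{k−1}+j} over ℚ (or ℂ), and let t₊ = Σ_{l≥1} Σ_{k=1}^{n_l −1} E_{l+s_{k−1}, l+s_k}. Then: (i) [δ, t₊] = t₊; (ii) trace(δ) = 0; (iii) for all indices i, j, the difference δ_{ii} − δ_{jj} is an integer, so that the adjoint action of δ has only integral eigenvalues on the elementary matrices E_{ij} (namely [δ, E_{ij}] = (δ_{ii} − δ_{jj}) E_{ij} with δ_{ii} − δ_{jj} ∈ ℤ). -/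

import Mathlib

open Finset

/-- The grading element `δ` associated to a partition of `n`: it satisfies `[δ, t₊] = t₊`,
is traceless, and the differences of its diagonal entries are integers, so that the adjoint
action of `δ` has only integral eigenvalues on the elementary matrices:
`[δ, E_{ij}] = (δ_{ii} - δ_{jj}) E_{ij}` with `δ_{ii} - δ_{jj} ∈ ℤ`. -/
theorem grading_element_of_partition
    (n r : ℕ) (hr : 0 < r) (ν : ℕ → ℕ)
    (hpos : ∀ i ∈ Finset.Icc 1 r, 0 < ν i)
    (hmono : ∀ i ∈ Finset.Icc 1 r, ∀ j ∈ Finset.Icc 1 r, i ≤ j → ν j ≤ ν i)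
    (hsum : ∑ i ∈ Finset.Icc 1 r, ν i = n)
    (m : ℕ → ℕ) (hm : ∀ k, m k = ((Finset.Icc 1 r).filter (fun i => k ≤ ν i)).card)
    (s : ℕ → ℕ) (hs : ∀ t, s t = ∑ k ∈ Finset.Icc 1 t, m k)
    (E : ℕ → ℕ → Matrix (Fin n) (Fin n) ℚ)
    (hE : ∀ i j, E i j =
      Matrix.of fun (a b : Fin n) => if (a : ℕ) + 1 = i ∧ (b : ℕ) + 1 = j then 1 else 0)
    (c : ℚ)
    (hc : c = (∑ l ∈ Finset.Icc 1 (ν 1), (l : ℚ) * (m l : ℚ)) /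
        (∑ l ∈ Finset.Icc 1 (ν 1), (m l : ℚ)))
    (δ : Matrix (Fin n) (Fin n) ℚ)
    (hδ : δ = ∑ k ∈ Finset.Icc 1 (ν 1), ∑ j ∈ Finset.Icc 1 (m k),
        ((c - (k : ℚ)) • E (s (k - 1) + j) (s (k - 1) + j)))
    (tp : Matrix (Fin n) (Fin n) ℚ)
    (htp : tp = ∑ l ∈ Finset.Icc 1 r, ∑ k ∈ Finset.Icc 1 (ν l - 1),
        E (l + s (k - 1)) (l + s k)) :
    δ * tp - tp * δ = tp ∧
    Matrix.trace δ = 0 ∧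
    ∀ i j : Fin n, ∃ z : ℤ, δ i i - δ j j = (z : ℚ) ∧
      δ * Matrix.single i j 1 - Matrix.single i j 1 * δ
        = (δ i i - δ j j) • Matrix.single i j 1 := by
  have h1r : (1:ℕ) ∈ Finset.Icc 1 r := Finset.mem_Icc.mpr ⟨le_refl 1, hr⟩
  have hν1 : ∀ i ∈ Finset.Icc 1 r, ν i ≤ ν 1 := fun i hi =>
    hmono 1 h1r i hi (Finset.mem_Icc.mp hi).1
  have hs0 : s 0 = 0 := by simp [hs]
  have hsmono : ∀ a b : ℕ, a ≤ b → s a ≤ s b := by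
    intro a b hab
    rw [hs, hs]
    exact Finset.sum_le_sum_of_subset (Finset.Icc_subset_Icc_right hab)
  have hstep : ∀ k : ℕ, 1 ≤ k → s k = s (k-1) + m k := by
    intro k hk
    obtain ⟨t, rfl⟩ : ∃ t, k = t + 1 := ⟨k - 1, by omega⟩
    rw [hs, hs, Finset.sum_Icc_succ_top (by omega)]
    simp
  -- l ≤ m k when 1 ≤ l ≤ r and 1 ≤ k ≤ ν l
  have hblock : ∀ l k : ℕ, 1 ≤ l → l ≤ r → k ≤ ν l → l ≤ m k := by
    intro l k hl1 hlr hkl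
    have hsub : Finset.Icc 1 l ⊆ (Finset.Icc 1 r).filter (fun i => k ≤ ν i) := by
      intro i hi
      rw [Finset.mem_Icc] at hi
      rw [Finset.mem_filter, Finset.mem_Icc]
      refine ⟨⟨hi.1, le_trans hi.2 hlr⟩, le_trans hkl ?_⟩
      exact hmono i (Finset.mem_Icc.mpr ⟨hi.1, le_trans hi.2 hlr⟩)
        l (Finset.mem_Icc.mpr ⟨hl1, hlr⟩) hi.2
    calc l = (Finset.Icc 1 l).card := by simp
      _ ≤ _ := Finset.card_le_card hsub
    |>.trans_eq (hm k).symm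
  have hstop : s (ν 1) = n := by
    rw [hs]
    calc ∑ k ∈ Finset.Icc 1 (ν 1), m k
        = ∑ k ∈ Finset.Icc 1 (ν 1), ∑ i ∈ Finset.Icc 1 r, if k ≤ ν i then 1 else 0 := by
          refine Finset.sum_congr rfl fun k _ => ?_
          rw [hm, Finset.card_filter]
      _ = ∑ i ∈ Finset.Icc 1 r, ∑ k ∈ Finset.Icc 1 (ν 1), if k ≤ ν i then 1 else 0 :=
          Finset.sum_comm
      _ = ∑ i ∈ Finset.Icc 1 r, ν i := by
          refine Finset.sum_congr rfl fun i hi => ?_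
          rw [← Finset.card_filter]
          have hfil : (Finset.Icc 1 (ν 1)).filter (fun k => k ≤ ν i) = Finset.Icc 1 (ν i) := by
            ext k
            have := hν1 i hi
            simp only [Finset.mem_filter, Finset.mem_Icc]
            omega
          rw [hfil]
          simp
      _ = n := hsum
  have hn : 0 < n := by
    have : r ≤ ∑ i ∈ Finset.Icc 1 r, ν i := by
      calc r = ∑ _i ∈ Finset.Icc 1 r, 1 := by simp
        _ ≤ _ := Finset.sum_le_sum fun i hi => hpos i hi
    omega
  -- diagonal entry formula
  have hdiagval : ∀ (a : Fin n) (k : ℕ), 1 ≤ k → k ≤ ν 1 → s (k-1) < (a:ℕ)+1 →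
      (a:ℕ)+1 ≤ s k → δ a a = c - k := by
    intro a k hk1 hk2 hka hka'
    rw [hδ]
    simp only [Matrix.sum_apply, Matrix.smul_apply, hE, Matrix.of_apply, and_self,
      smul_eq_mul, mul_ite, mul_one, mul_zero]
    have hinner : ∀ k' : ℕ,
        (∑ j ∈ Finset.Icc 1 (m k'), if (a:ℕ)+1 = s (k'-1) + j then c - (k':ℚ) else 0)
        = if s (k'-1) < (a:ℕ)+1 ∧ (a:ℕ)+1 ≤ s (k'-1) + m k' then c - (k':ℚ) else 0 := by
      intro k'
      by_cases h : s (k'-1) < (a:ℕ)+1 ∧ (a:ℕ)+1 ≤ s (k'-1) + m k'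
      · rw [if_pos h, Finset.sum_eq_single ((a:ℕ)+1 - s (k'-1))]
        · rw [if_pos (by omega)]
        · intro j hj hne
          rw [Finset.mem_Icc] at hj
          rw [if_neg (by omega)]
        · intro hmem
          exact absurd (Finset.mem_Icc.mpr ⟨by omega, by omega⟩) hmem
      · rw [if_neg h]
        refine Finset.sum_eq_zero fun j hj => ?_
        rw [Finset.mem_Icc] at hj
        rw [if_neg (by omega)]
    rw [Finset.sum_congr rfl fun k' _ => hinner k']
    rw [Finset.sum_eq_single k]
    · rw [if_pos ⟨hka, by rw [← hstep k hk1]; exact hka'⟩]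
    · intro k' hk' hne
      rw [Finset.mem_Icc] at hk'
      rw [if_neg]
      rintro ⟨h1, h2⟩
      rw [← hstep k' hk'.1] at h2
      rcases lt_or_gt_of_ne hne with hlt | hgt
      · have : s k' ≤ s (k-1) := hsmono k' (k-1) (by omega)
        omega
      · have : s k ≤ s (k'-1) := hsmono k (k'-1) (by omega)
        omega
    · intro hmem
      exact absurd (Finset.mem_Icc.mpr ⟨hk1, hk2⟩) hmem
  -- off-diagonal vanishing
  have hoff : ∀ a b : Fin n, a ≠ b → δ a b = 0 := by
    intro a b hab
    rw [hδ]
    simp only [Matrix.sum_apply, Matrix.smul_apply, hE, Matrix.of_apply, smul_eq_mul,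
      mul_ite, mul_one, mul_zero]
    refine Finset.sum_eq_zero fun k _ => Finset.sum_eq_zero fun j _ => ?_
    rw [if_neg]
    rintro ⟨h1, h2⟩
    exact hab (Fin.ext (by omega))
  -- existence of block
  have hKex : ∀ a : Fin n, ∃ k : ℕ, 1 ≤ k ∧ k ≤ ν 1 ∧ s (k-1) < (a:ℕ)+1 ∧ (a:ℕ)+1 ≤ s k := by
    intro a
    have han : (a:ℕ)+1 ≤ n := a.isLt
    have hP : ∃ k, (a:ℕ)+1 ≤ s k := ⟨ν 1, by rw [hstop]; exact han⟩
    classical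
    refine ⟨Nat.find hP, ?_, ?_, ?_, Nat.find_spec hP⟩
    · rcases Nat.eq_zero_or_pos (Nat.find hP) with h | h
      · exfalso
        have := Nat.find_spec hP
        rw [h, hs0] at this
        omega
      · exact h
    · exact Nat.find_min' hP (by rw [hstop]; exact han)
    · have h1 : 1 ≤ Nat.find hP := by
        rcases Nat.eq_zero_or_pos (Nat.find hP) with h | h
        · exfalso
          have := Nat.find_spec hP
          rw [h, hs0] at this
          omega
        · exact h
      have := Nat.find_min hP (show Nat.find hP - 1 < Nat.find hP by omega)
      omega
  -- generic commutator with stdBasisMatrix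
  have hcomm : ∀ i j : Fin n,
      δ * Matrix.single i j 1 - Matrix.single i j 1 * δ
        = (δ i i - δ j j) • Matrix.single i j 1 := by
    intro i j
    ext a b
    simp only [Matrix.sub_apply, Matrix.smul_apply, Matrix.mul_apply,
      Matrix.single, Matrix.of_apply, smul_eq_mul, mul_ite, mul_one, mul_zero,
      ite_mul, zero_mul, one_mul]
    by_cases hai : i = a <;> by_cases hbj : j = b
    · subst hai; subst hbj
      simp only [and_true, true_and, and_self, if_true, Finset.sum_ite_eq,
        Finset.mem_univ]
    · subst hai
      simp only [hbj, and_false, if_false, Finset.sum_const_zero, zero_sub, true_and]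
      rw [Finset.sum_ite_eq]
      simp only [Finset.mem_univ, if_true]
      rw [hoff j b hbj, neg_zero]
    · subst hbj
      simp only [hai, false_and, if_false, Finset.sum_const_zero, sub_zero, and_true]
      rw [Finset.sum_ite_eq]
      simp only [Finset.mem_univ, if_true]
      exact hoff a i (fun h => hai h.symm)
    · simp [hai, hbj]
  refine ⟨?_, ?_, ?_⟩
  · -- [δ, tp] = tp
    ext a b
    have hδtp : (δ * tp) a b = δ a a * tp a b := by
      rw [Matrix.mul_apply, Finset.sum_eq_single a]
      · intro x _ hx
        rw [hoff a x (Ne.symm hx), zero_mul]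
      · intro h
        exact absurd (Finset.mem_univ a) h
    have htpδ : (tp * δ) a b = tp a b * δ b b := by
      rw [Matrix.mul_apply, Finset.sum_eq_single b]
      · intro x _ hx
        rw [hoff x b hx, mul_zero]
      · intro h
        exact absurd (Finset.mem_univ b) h
    rw [Matrix.sub_apply, hδtp, htpδ]
    by_cases h0 : tp a b = 0
    · rw [h0]; ring
    · have h0' := h0
      rw [htp, Matrix.sum_apply] at h0'
      obtain ⟨l, hl, hne⟩ := Finset.exists_ne_zero_of_sum_ne_zero h0'
      rw [Matrix.sum_apply] at hne
      obtain ⟨k, hk, hne2⟩ := Finset.exists_ne_zero_of_sum_ne_zero hne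
      rw [hE, Matrix.of_apply] at hne2
      have hcond : (a:ℕ)+1 = l + s (k-1) ∧ (b:ℕ)+1 = l + s k := by
        by_contra h
        rw [if_neg h] at hne2
        exact hne2 rfl
      rw [Finset.mem_Icc] at hl hk
      have hνl1 : 0 < ν l := hpos l (Finset.mem_Icc.mpr ⟨hl.1, hl.2⟩)
      have hνlν1 : ν l ≤ ν 1 := hν1 l (Finset.mem_Icc.mpr ⟨hl.1, hl.2⟩)
      have hk1 : k + 1 ≤ ν l := by omega
      have hmk : l ≤ m k := hblock l k hl.1 hl.2 (by omega)
      have hmk1 : l ≤ m (k+1) := hblock l (k+1) hl.1 hl.2 hk1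
      have hδa : δ a a = c - k := by
        refine hdiagval a k hk.1 (by omega) (by omega) ?_
        rw [hstep k hk.1]
        omega
      have hδb : δ b b = c - (k+1 : ℕ) := by
        refine hdiagval b (k+1) (by omega) (by omega) ?_ ?_
        · simp only [Nat.add_sub_cancel]
          omega
        · rw [hstep (k+1) (by omega)]
          simp only [Nat.add_sub_cancel]
          omega
      rw [hδa, hδb]
      push_cast
      ring
  · -- trace
    have hD : (∑ l ∈ Finset.Icc 1 (ν 1), (m l : ℚ)) = (n : ℚ) := by
      rw [← hstop, hs]
      push_cast
      ring
    have hDne : (∑ l ∈ Finset.Icc 1 (ν 1), (m l : ℚ)) ≠ 0 := by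
      rw [hD]
      exact_mod_cast hn.ne'
    have hEtr : ∀ k ∈ Finset.Icc 1 (ν 1), ∀ j ∈ Finset.Icc 1 (m k),
        Matrix.trace (E (s (k-1) + j) (s (k-1) + j)) = 1 := by
      intro k hk j hj
      rw [Finset.mem_Icc] at hk hj
      have hub : s (k-1) + j ≤ n := by
        have h1 : s (k-1) + j ≤ s k := by rw [hstep k hk.1]; omega
        have h2 : s k ≤ s (ν 1) := hsmono k (ν 1) hk.2
        omega
      rw [hE, Matrix.trace]
      have hlt : s (k-1) + j - 1 < n := by omega
      rw [Finset.sum_eq_single (⟨s (k-1) + j - 1, hlt⟩ : Fin n)]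
      · simp only [Matrix.diag_apply, Matrix.of_apply]
        rw [if_pos ⟨by omega, by omega⟩]
      · intro x _ hx
        simp only [Matrix.diag_apply, Matrix.of_apply, and_self]
        rw [if_neg]
        intro hcx
        exact hx (Fin.ext (by simp; omega))
      · intro h
        exact absurd (Finset.mem_univ _) h
    rw [hδ, Matrix.trace_sum]
    have hrow : ∀ k ∈ Finset.Icc 1 (ν 1),
        Matrix.trace (∑ j ∈ Finset.Icc 1 (m k), (c - (k:ℚ)) • E (s (k-1)+j) (s (k-1)+j))
          = (m k : ℚ) * (c - (k:ℚ)) := by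
      intro k hk
      rw [Matrix.trace_sum]
      rw [Finset.sum_congr rfl fun j hj => by
        rw [Matrix.trace_smul, hEtr k hk j hj, smul_eq_mul, mul_one]]
      rw [Finset.sum_const, Nat.card_Icc]
      simp [nsmul_eq_mul]
    rw [Finset.sum_congr rfl hrow]
    have expand : ∑ k ∈ Finset.Icc 1 (ν 1), (m k : ℚ) * (c - (k:ℚ))
        = (∑ k ∈ Finset.Icc 1 (ν 1), (m k : ℚ)) * c
          - ∑ k ∈ Finset.Icc 1 (ν 1), (k : ℚ) * (m k : ℚ) := by
      rw [Finset.sum_mul, ← Finset.sum_sub_distrib]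
      refine Finset.sum_congr rfl fun k _ => ?_
      ring
    rw [expand, hc, mul_div_cancel₀ _ hDne, sub_self]
  · -- integrality and eigenvalue identity
    intro i j
    obtain ⟨ki, hki1, hki2, hki3, hki4⟩ := hKex i
    obtain ⟨kj, hkj1, hkj2, hkj3, hkj4⟩ := hKex j
    have hi : δ i i = c - ki := hdiagval i ki hki1 hki2 hki3 hki4
    have hj : δ j j = c - kj := hdiagval j kj hkj1 hkj2 hkj3 hkj4
    refine ⟨(kj : ℤ) - (ki : ℤ), ?_, hcomm i j⟩
    rw [hi, hj]
    push_cast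
    ring
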